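/- Dirac structures on a finite-dimensional real vector space V are in bijection with pairs (R, Ω) where R ⊆ V is a subspace and Ω is a skew-symmetric bilinear form on R: given L, set R = ρ(L) and Ω_L(x)(y) = η(y) for any η ∈ V* with (x,η) ∈ L (which is well defined); conversely, given (R,Ω), the set L = {(x,η) : x ∈ R, η ∈ V*, η|_R = Ω(x,·)} is a Dirac structure with ρ(L) = R and Ω_L = Ω. Moreover ker Ω_L = V ∩ L. -/

import Mathlib

open Module LinearMap

variable {V W U : Type*} [AddCommGroup V] [Module ℝ V] [FiniteDimensional ℝ V]
  [AddCommGroup W] [Module ℝ W] [FiniteDimensional ℝ W]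
  [AddCommGroup U] [Module ℝ U] [FiniteDimensional ℝ U]

/-- The canonical symmetric pairing on `V ⊕ V*`. -/
noncomputable def diracPairing (p q : V × Module.Dual ℝ V) : ℝ := (p.2 q.1 + q.2 p.1) / 2

/-- A subspace of `V ⊕ V*` is isotropic if the pairing vanishes on it. -/
def IsIsotropic (L : Submodule ℝ (V × Module.Dual ℝ V)) : Prop :=
  ∀ p ∈ L, ∀ q ∈ L, diracPairing p q = 0

/-- A Dirac structure: a maximally isotropic subspace. -/
def IsDirac (L : Submodule ℝ (V × Module.Dual ℝ V)) : Prop :=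
  IsIsotropic L ∧ ∀ L' : Submodule ℝ (V × Module.Dual ℝ V), IsIsotropic L' → L ≤ L' → L' = L

/-- The graph of a bivector `π : V* → V`. -/
def graphBiv (π : Module.Dual ℝ V →ₗ[ℝ] V) : Submodule ℝ (V × Module.Dual ℝ V) where
  carrier := {p | p.1 = π p.2}
  add_mem' := by
    intro a b ha hb
    simp only [Set.mem_setOf_eq, Prod.fst_add, Prod.snd_add, map_add] at *
    rw [ha, hb]
  zero_mem' := by simp
  smul_mem' := by
    intro c a ha
    simp only [Set.mem_setOf_eq, Prod.smul_fst, Prod.smul_snd, map_smul] at *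
    rw [ha]

/-- Forward image of a Dirac structure along a linear map. -/
def Fwd (φ : V →ₗ[ℝ] W) (L : Submodule ℝ (V × Module.Dual ℝ V)) :
    Submodule ℝ (W × Module.Dual ℝ W) where
  carrier := {q | ∃ x : V, q.1 = φ x ∧ (x, φ.dualMap q.2) ∈ L}
  add_mem' := by
    rintro a b ⟨x, hx, hxL⟩ ⟨y, hy, hyL⟩
    refine ⟨x + y, ?_, ?_⟩
    · simp [Prod.fst_add, hx, hy]
    · simpa [Prod.snd_add, Prod.mk_add_mk] using L.add_mem hxL hyL
  zero_mem' := ⟨0, by simp, by simp only [Prod.fst_zero, Prod.snd_zero, map_zero]; exact L.zero_mem⟩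
  smul_mem' := by
    rintro c a ⟨x, hx, hxL⟩
    refine ⟨c • x, ?_, ?_⟩
    · simp [Prod.smul_fst, hx]
    · simpa [Prod.smul_snd, Prod.smul_mk] using L.smul_mem c hxL

/-- Backward image of a Dirac structure along a linear map. -/
def Bwd (φ : V →ₗ[ℝ] W) (L : Submodule ℝ (W × Module.Dual ℝ W)) :
    Submodule ℝ (V × Module.Dual ℝ V) where
  carrier := {p | ∃ η : Module.Dual ℝ W, p.2 = φ.dualMap η ∧ (φ p.1, η) ∈ L}
  add_mem' := by
    rintro a b ⟨x, hx, hxL⟩ ⟨y, hy, hyL⟩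
    refine ⟨x + y, ?_, ?_⟩
    · simp [Prod.snd_add, hx, hy]
    · simpa [Prod.fst_add, Prod.mk_add_mk] using L.add_mem hxL hyL
  zero_mem' := ⟨0, by simp, by simp only [Prod.fst_zero, Prod.snd_zero, map_zero]; exact L.zero_mem⟩
  smul_mem' := by
    rintro c a ⟨x, hx, hxL⟩
    refine ⟨c • x, ?_, ?_⟩
    · simp [Prod.smul_snd, hx]
    · simpa [Prod.smul_fst, Prod.smul_mk] using L.smul_mem c hxL

/-- Gauge transformation of a Dirac structure by a 2-form `B : V → V*`. -/
def tau (B : V →ₗ[ℝ] Module.Dual ℝ V) (L : Submodule ℝ (V × Module.Dual ℝ V)) :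
    Submodule ℝ (V × Module.Dual ℝ V) where
  carrier := {p | (p.1, p.2 - B p.1) ∈ L}
  add_mem' := by
    intro a b ha hb
    have := L.add_mem ha hb
    simpa [Prod.mk_add_mk, Prod.fst_add, Prod.snd_add, map_add, add_sub_add_comm] using this
  zero_mem' := by
    change ((0 : V × Module.Dual ℝ V).1, (0 : V × Module.Dual ℝ V).2 - B (0 : V × Module.Dual ℝ V).1) ∈ L
    simp only [Prod.fst_zero, Prod.snd_zero, map_zero, sub_zero]; exact L.zero_mem
  smul_mem' := by
    intro c a ha
    have := L.smul_mem c ha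
    simpa [Prod.smul_mk, Prod.smul_fst, Prod.smul_snd, smul_sub] using this

/-- Orthogonal of a subspace with respect to a bilinear form `Ω : V → V*`. -/
def orth (Ω : V →ₗ[ℝ] Module.Dual ℝ V) (S : Submodule ℝ V) : Submodule ℝ V where
  carrier := {x | ∀ y ∈ S, Ω x y = 0}
  add_mem' := by
    intro a b ha hb y hy
    simp [map_add, ha y hy, hb y hy]
  zero_mem' := by simp
  smul_mem' := by
    intro c a ha y hy
    simp [ha y hy]

/-- Pullback of a 2-form along a linear map. -/
def pb (φ : V →ₗ[ℝ] W) (B : W →ₗ[ℝ] Module.Dual ℝ W) : V →ₗ[ℝ] Module.Dual ℝ V :=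
  φ.dualMap ∘ₗ B ∘ₗ φ

/-- The Dirac structure associated to a pair `(R, Ω)` of a subspace and a skew form on it. -/
def diracOfForm (R : Submodule ℝ V) (Ω : R →ₗ[ℝ] Module.Dual ℝ R) :
    Submodule ℝ (V × Module.Dual ℝ V) where
  carrier := {p | ∃ hx : p.1 ∈ R, ∀ y : R, p.2 y = Ω ⟨p.1, hx⟩ y}
  add_mem' := by
    rintro a b ⟨ha, Ha⟩ ⟨hb, Hb⟩
    refine ⟨R.add_mem ha hb, fun y => ?_⟩
    have h : (⟨(a + b).1, R.add_mem ha hb⟩ : R) = ⟨a.1, ha⟩ + ⟨b.1, hb⟩ := rfl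
    rw [h, map_add]
    simp [Prod.snd_add, Ha y, Hb y]
  zero_mem' := by
    refine ⟨R.zero_mem, fun y => ?_⟩
    have h : (⟨((0 : V × Module.Dual ℝ V)).1, R.zero_mem⟩ : R) = 0 := rfl
    rw [h, map_zero]
    rfl
  smul_mem' := by
    rintro c a ⟨ha, Ha⟩
    refine ⟨R.smul_mem c ha, fun y => ?_⟩
    have h : (⟨(c • a).1, R.smul_mem c ha⟩ : R) = c • ⟨a.1, ha⟩ := rfl
    rw [h, map_smul]
    simp [Prod.smul_snd, Ha y]

lemma mem_diracOfForm {R : Submodule ℝ V} {Ω : R →ₗ[ℝ] Module.Dual ℝ R}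
    {p : V × Module.Dual ℝ V} :
    p ∈ diracOfForm R Ω ↔ ∃ hx : p.1 ∈ R, ∀ y : R, p.2 y = Ω ⟨p.1, hx⟩ y := Iff.rfl

/-- Well-definedness of the induced form. -/
lemma wd_aux {L : Submodule ℝ (V × Module.Dual ℝ V)} (hL : IsIsotropic L)
    (x : V) (η₁ η₂ : Module.Dual ℝ V) (h1 : (x, η₁) ∈ L) (h2 : (x, η₂) ∈ L)
    (y : V) (hy : ∃ μ, (y, μ) ∈ L) : η₁ y = η₂ y := by
  obtain ⟨μ, hμ⟩ := hy
  have hd : ((x, η₁) - (x, η₂) : V × Module.Dual ℝ V) ∈ L := L.sub_mem h1 h2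
  have := hL _ hd _ hμ
  simp only [diracPairing, Prod.fst_sub, Prod.snd_sub, sub_self, map_zero,
    LinearMap.sub_apply, add_zero, div_eq_zero_iff] at this
  rcases this with h | h
  · linarith [h]
  · norm_num at h

lemma diracOfForm_isotropic (R : Submodule ℝ V) (Ω : R →ₗ[ℝ] Module.Dual ℝ R)
    (hskew : ∀ x y : R, Ω x y = - Ω y x) : IsIsotropic (diracOfForm R Ω) := by
  rintro ⟨x, η⟩ ⟨hx, hη⟩ ⟨y, μ⟩ ⟨hy, hμ⟩
  have h1 := hη ⟨y, hy⟩
  have h2 := hμ ⟨x, hx⟩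
  simp only [diracPairing]
  rw [show η y = Ω ⟨x, hx⟩ ⟨y, hy⟩ from h1, show μ x = Ω ⟨y, hy⟩ ⟨x, hx⟩ from h2,
    hskew ⟨y, hy⟩ ⟨x, hx⟩]
  ring

lemma diracOfForm_isDirac (R : Submodule ℝ V) (Ω : R →ₗ[ℝ] Module.Dual ℝ R)
    (hskew : ∀ x y : R, Ω x y = - Ω y x) : IsDirac (diracOfForm R Ω) := by
  refine ⟨diracOfForm_isotropic R Ω hskew, ?_⟩
  intro L' hI hle
  refine le_antisymm ?_ hle
  rintro ⟨x, η⟩ hp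
  have hx : x ∈ R := by
    rw [← Subspace.forall_mem_dualAnnihilator_apply_eq_zero_iff R x]
    intro μ hμ
    have hμL : ((0 : V), μ) ∈ diracOfForm R Ω := by
      refine ⟨R.zero_mem, fun y => ?_⟩
      have h0 : (⟨(0 : V), R.zero_mem⟩ : R) = 0 := rfl
      rw [h0, map_zero]
      have := (Submodule.mem_dualAnnihilator μ).mp hμ (y : V) y.2
      simpa using this
    have := hI _ hp _ (hle hμL)
    simp only [diracPairing, map_zero, zero_add, div_eq_zero_iff] at this
    rcases this with h | h
    · exact h
    · norm_num at h
  refine ⟨hx, fun y => ?_⟩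
  obtain ⟨g, hg⟩ := LinearMap.exists_extend (Ω y)
  have hgL : ((y : V), g) ∈ diracOfForm R Ω := by
    refine ⟨y.2, fun z => ?_⟩
    have : g ((z : R) : V) = Ω ⟨(y : V), y.2⟩ z := by
      have := congrArg (fun f => f z) hg
      simpa using this
    exact this
  have hpair := hI _ hp _ (hle hgL)
  have hgx : g x = Ω y ⟨x, hx⟩ := by
    have := congrArg (fun f => f ⟨x, hx⟩) hg
    simpa using this
  simp only [diracPairing, div_eq_zero_iff] at hpair
  rcases hpair with h | h
  · rw [hgx, hskew y ⟨x, hx⟩] at h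
    linarith
  · norm_num at h

lemma diracOfForm_map_fst (R : Submodule ℝ V) (Ω : R →ₗ[ℝ] Module.Dual ℝ R) :
    Submodule.map (LinearMap.fst ℝ V (Module.Dual ℝ V)) (diracOfForm R Ω) = R := by
  apply le_antisymm
  · rintro x ⟨⟨y, η⟩, ⟨hy, -⟩, rfl⟩
    exact hy
  · intro x hx
    obtain ⟨g, hg⟩ := LinearMap.exists_extend (Ω ⟨x, hx⟩)
    refine ⟨(x, g), ⟨hx, fun z => ?_⟩, rfl⟩
    have := congrArg (fun f => f z) hg
    simpa using this

/-- Every Dirac structure is of the form `diracOfForm R Ω`. -/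
lemma isDirac_exists (L : Submodule ℝ (V × Module.Dual ℝ V)) (hL : IsDirac L) :
    ∃ (R : Submodule ℝ V) (Ω : R →ₗ[ℝ] Module.Dual ℝ R),
      (∀ x y : R, Ω x y = - Ω y x) ∧ diracOfForm R Ω = L := by
  set R := Submodule.map (LinearMap.fst ℝ V (Module.Dual ℝ V)) L with hR
  have hcod : ∀ p : L, ((LinearMap.fst ℝ V (Module.Dual ℝ V)).comp L.subtype) p ∈ R :=
    fun p => ⟨p.1, p.2, rfl⟩
  set f : L →ₗ[ℝ] R :=
    LinearMap.codRestrict R ((LinearMap.fst ℝ V (Module.Dual ℝ V)).comp L.subtype) hcod with hf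
  have hsurj : LinearMap.range f = ⊤ := by
    rw [LinearMap.range_eq_top]
    rintro ⟨x, hx⟩
    obtain ⟨p, hp, hfst⟩ := hx
    exact ⟨⟨p, hp⟩, Subtype.ext hfst⟩
  obtain ⟨s, hs⟩ := f.exists_rightInverse_of_surjective hsurj
  have hsfst : ∀ x : R, ((s x : V × Module.Dual ℝ V)).1 = (x : V) := by
    intro x
    have := congrArg (fun g => ((g x : R) : V)) hs
    simpa [hf, LinearMap.codRestrict] using this
  set Ω : R →ₗ[ℝ] Module.Dual ℝ R :=
    (R.subtype.dualMap.comp ((LinearMap.snd ℝ V (Module.Dual ℝ V)).comp L.subtype)).comp s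
    with hΩ
  have hΩapp : ∀ (x y : R), Ω x y = ((s x : V × Module.Dual ℝ V)).2 (y : V) := fun x y => rfl
  have hskew : ∀ x y : R, Ω x y = - Ω y x := by
    intro x y
    have := hL.1 _ (s x).2 _ (s y).2
    simp only [diracPairing, div_eq_zero_iff] at this
    rcases this with h | h
    · rw [hΩapp x y, hΩapp y x, ← hsfst x, ← hsfst y]
      linarith
    · norm_num at h
  refine ⟨R, Ω, hskew, ?_⟩
  have hle : L ≤ diracOfForm R Ω := by
    rintro ⟨x, η⟩ hp
    have hx : x ∈ R := ⟨(x, η), hp, rfl⟩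
    refine ⟨hx, fun y => ?_⟩
    have hsx : ((s ⟨x, hx⟩ : V × Module.Dual ℝ V)).1 = x := hsfst ⟨x, hx⟩
    have hsxL : (x, ((s ⟨x, hx⟩ : V × Module.Dual ℝ V)).2) ∈ L := by
      have := (s ⟨x, hx⟩).2
      rwa [show ((s ⟨x, hx⟩ : V × Module.Dual ℝ V)) =
        (((s ⟨x, hx⟩ : V × Module.Dual ℝ V)).1, ((s ⟨x, hx⟩ : V × Module.Dual ℝ V)).2) from rfl,
        hsx] at this
    have hy : ∃ μ, ((y : V), μ) ∈ L := by
      obtain ⟨q, hq, hqfst⟩ := y.2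
      exact ⟨q.2, by rwa [show ((y : V), q.2) = q from Prod.ext hqfst.symm rfl]⟩
    exact wd_aux hL.1 x η _ hp hsxL (y : V) hy
  rw [hL.2 (diracOfForm R Ω) (diracOfForm_isotropic R Ω hskew) hle]

/-- Dirac structures on `V` correspond to pairs `(R, Ω)` of a subspace `R ⊆ V`
and a skew form `Ω` on `R`; moreover `ker Ω_L = V ∩ L`. -/
theorem stmt_4 :
    -- the form `Ω_L(x)(y) = η(y)` for `(x,η) ∈ L` is well defined
    (∀ L : Submodule ℝ (V × Module.Dual ℝ V), IsDirac L →
      ∀ (x : V) (η₁ η₂ : Module.Dual ℝ V), (x, η₁) ∈ L → (x, η₂) ∈ L →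
        ∀ y : V, (∃ μ, (y, μ) ∈ L) → η₁ y = η₂ y) ∧
    -- a pair `(R, Ω)` gives a Dirac structure with `ρ(L) = R` and `Ω_L = Ω`
    (∀ (R : Submodule ℝ V) (Ω : R →ₗ[ℝ] Module.Dual ℝ R),
      (∀ x y : R, Ω x y = - Ω y x) →
      IsDirac (diracOfForm R Ω) ∧
      Submodule.map (LinearMap.fst ℝ V (Module.Dual ℝ V)) (diracOfForm R Ω) = R ∧
      (∀ (x : R) (η : Module.Dual ℝ V), ((x : V), η) ∈ diracOfForm R Ω →
        ∀ y : R, η y = Ω x y)) ∧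
    -- every Dirac structure arises this way
    (∀ L : Submodule ℝ (V × Module.Dual ℝ V), IsDirac L →
      ∃ (R : Submodule ℝ V) (Ω : R →ₗ[ℝ] Module.Dual ℝ R),
        (∀ x y : R, Ω x y = - Ω y x) ∧ diracOfForm R Ω = L) ∧
    -- `ker Ω_L = V ∩ L`
    (∀ L : Submodule ℝ (V × Module.Dual ℝ V), IsDirac L → ∀ x : V,
      ((x, (0 : Module.Dual ℝ V)) ∈ L ↔
        ∃ η : Module.Dual ℝ V, (x, η) ∈ L ∧
          ∀ y ∈ Submodule.map (LinearMap.fst ℝ V (Module.Dual ℝ V)) L, η y = 0)) := by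
  refine ⟨?_, ?_, ?_, ?_⟩
  · intro L hL x η₁ η₂ h1 h2 y hy
    exact wd_aux hL.1 x η₁ η₂ h1 h2 y hy
  · intro R Ω hskew
    refine ⟨diracOfForm_isDirac R Ω hskew, diracOfForm_map_fst R Ω, ?_⟩
    rintro x η ⟨hx, hη⟩ y
    have := hη y
    rwa [show (⟨(((x : V), η)).1, hx⟩ : R) = x from Subtype.ext rfl] at this
  · exact isDirac_exists
  · intro L hL x
    constructor
    · intro h
      exact ⟨0, h, fun y _ => by simp⟩
    · rintro ⟨η, hη, hvan⟩
      obtain ⟨R, Ω, hskew, hEq⟩ := isDirac_exists L hL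
      have hmap : Submodule.map (LinearMap.fst ℝ V (Module.Dual ℝ V)) L = R := by
        rw [← hEq]; exact diracOfForm_map_fst R Ω
      have h0 : ((0 : V), η) ∈ L := by
        rw [← hEq]
        refine ⟨R.zero_mem, fun y => ?_⟩
        have h0' : (⟨(((0 : V), η)).1, R.zero_mem⟩ : R) = 0 := rfl
        rw [h0', map_zero]
        have : η (y : V) = 0 := hvan (y : V) (by rw [hmap]; exact y.2)
        simpa using this
      have := L.sub_mem hη h0
      simpa using this
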